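/- arXiv:2412.11522 — 3 statements merged into one kernel-verified Lean document; each statement's English description precedes it below -/
import Mathlib

section
/- If G is block Toeplitz, then for every ω ∈ ℂ with |ω| ≤ 1, both p×p matrices Σ_{j=0}^{n} ω^j γ_{j0} (= F(ω)Γe₀) and Σ_{k=0}^{n} ω^{n−k} γ_{kn} are invertible. -/
open Matrix Complex
open scoped ComplexConjugate ComplexOrder

noncomputable section

/-- Index type for `ℂ^m` with `m = (n+1)p`, viewed as `n+1` blocks of size `p`. -/
abbrev Idx (n p : ℕ) : Type := Fin (n + 1) × Fin p

/-- The `p × m` matrix polynomial `F(λ) = [I_p, λI_p, …, λ^n I_p]`. -/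
def Fm (n p : ℕ) (lam : ℂ) : Matrix (Fin p) (Idx n p) ℂ :=
  Matrix.of fun i jk => lam ^ (jk.1 : ℕ) * (if jk.2 = i then 1 else 0)

/-- The `m × p` matrix `e_k` whose `k`-th block is `I_p` and other blocks are `0`. -/
def Ek (n p : ℕ) (k : Fin (n + 1)) : Matrix (Idx n p) (Fin p) ℂ :=
  Matrix.of fun jl i => if jl.1 = k ∧ jl.2 = i then 1 else 0

/-- The nilpotent block shift matrix `A` with blocks `A_{ij} = I_p` iff `j = i+1`. -/
def Am (n p : ℕ) : Matrix (Idx n p) (Idx n p) ℂ :=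
  Matrix.of fun ia jb => if (jb.1 : ℕ) = (ia.1 : ℕ) + 1 ∧ ia.2 = jb.2 then 1 else 0

/-- `G` is block Toeplitz: `g_{i+1,j+1} = g_{ij}` for `0 ≤ i,j ≤ n−1`. -/
def BlockToeplitz (n p : ℕ) (G : Matrix (Idx n p) (Idx n p) ℂ) : Prop :=
  ∀ (i j : Fin n) (a b : Fin p),
    G (i.succ, a) (j.succ, b) = G (i.castSucc, a) (j.castSucc, b)

private lemma sum_zero_block {n p : ℕ} (f : Idx n p → ℂ) (h0 : ∀ a, f (0, a) = 0) :
    ∑ x : Idx n p, f x = ∑ j : Fin n, ∑ a : Fin p, f (j.succ, a) := by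
  rw [Fintype.sum_prod_type, Fin.sum_univ_succ]
  simp [h0]

private lemma sum_last_block {n p : ℕ} (f : Idx n p → ℂ) (h0 : ∀ a, f (Fin.last n, a) = 0) :
    ∑ x : Idx n p, f x = ∑ j : Fin n, ∑ a : Fin p, f (j.castSucc, a) := by
  rw [Fintype.sum_prod_type, Fin.sum_univ_castSucc]
  simp [h0]

lemma key (p n : ℕ) (G : Matrix (Idx n p) (Idx n p) ℂ) (hG : G.PosDef)
    (hT : BlockToeplitz n p G) (om : ℂ) (hom : ‖om‖ ≤ 1) :
    IsUnit (Matrix.of fun a b : Fin p =>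
        ∑ j : Fin (n + 1), om ^ (j : ℕ) * G⁻¹ (j, a) ((0 : Fin (n + 1)), b)) := by
  classical
  rw [Matrix.isUnit_iff_isUnit_det, isUnit_iff_ne_zero]
  intro hdet
  obtain ⟨v, hv, hMv⟩ := Matrix.exists_mulVec_eq_zero_iff.2 hdet
  have hGdet : IsUnit G.det := (Matrix.isUnit_iff_isUnit_det G).1 hG.isUnit
  have hGinv : G * G⁻¹ = 1 := Matrix.mul_nonsing_inv G hGdet
  set w : Idx n p → ℂ := fun x => if x.1 = 0 then v x.2 else 0 with hw
  set c : Idx n p → ℂ := G⁻¹ *ᵥ w with hcdef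
  have hGc : G *ᵥ c = w := by
    rw [hcdef, Matrix.mulVec_mulVec, hGinv, Matrix.one_mulVec]
  have hcval : ∀ (j : Fin (n+1)) (a : Fin p), c (j, a) = ∑ b : Fin p, G⁻¹ (j,a) (0,b) * v b := by
    intro j a
    show (G⁻¹ *ᵥ w) (j, a) = _
    simp only [Matrix.mulVec, dotProduct, hw]
    rw [Fintype.sum_prod_type, Fin.sum_univ_succ]
    simp [Fin.succ_ne_zero]
  have hc0 : ∀ a, ∑ k : Fin (n+1), om ^ (k:ℕ) * c (k, a) = 0 := by
    intro a
    have h := congrFun hMv a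
    simp only [Matrix.mulVec, dotProduct, Matrix.of_apply, Pi.zero_apply] at h
    calc ∑ k : Fin (n+1), om ^ (k:ℕ) * c (k,a)
        = ∑ k : Fin (n+1), ∑ b : Fin p, om^(k:ℕ) * (G⁻¹ (k,a) (0,b) * v b) := by
          simp only [hcval, Finset.mul_sum]
      _ = ∑ b : Fin p, (∑ k : Fin (n+1), om^(k:ℕ) * G⁻¹ (k,a) (0,b)) * v b := by
          rw [Finset.sum_comm]
          simp [Finset.sum_mul, mul_assoc]
      _ = 0 := h
  -- the quotient polynomial Q and its shifted versions S = z*Q, T = Q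
  set q : Fin n → Fin p → ℂ := fun j a =>
    ∑ k : Fin (n+1), (if (j:ℕ) < (k:ℕ) then om ^ ((k:ℕ) - (j:ℕ) - 1) else 0) * c (k, a) with hq
  set T : Idx n p → ℂ := fun x => ∑ j : Fin n, if x.1 = j.castSucc then q j x.2 else 0 with hTdef
  set S : Idx n p → ℂ := fun x => ∑ j : Fin n, if x.1 = j.succ then q j x.2 else 0 with hSdef
  have hS0 : ∀ a, S (0, a) = 0 := by
    intro a
    simp only [hSdef]
    exact Finset.sum_eq_zero fun j _ => if_neg (Fin.succ_ne_zero j).symm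
  have hTlast : ∀ a, T (Fin.last n, a) = 0 := by
    intro a
    simp only [hTdef]
    exact Finset.sum_eq_zero fun j _ => if_neg (Fin.castSucc_lt_last j).ne'
  have hSsucc : ∀ (j : Fin n) (a : Fin p), S (j.succ, a) = q j a := by
    intro j a
    simp only [hSdef]
    rw [Finset.sum_eq_single j (fun b _ hb => if_neg fun h => hb (Fin.succ_injective _ h).symm)
      (fun h => absurd (Finset.mem_univ j) h)]
    simp
  have hTcast : ∀ (j : Fin n) (a : Fin p), T (j.castSucc, a) = q j a := by
    intro j a
    simp only [hTdef]
    rw [Finset.sum_eq_single j (fun b _ hb => if_neg fun h => hb (Fin.castSucc_injective _ h).symm)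
      (fun h => absurd (Finset.mem_univ j) h)]
    simp
  have hTval : ∀ (i : Fin (n+1)) (a : Fin p), T (i, a) =
      ∑ k : Fin (n+1), (if (i:ℕ) < (k:ℕ) then om ^ ((k:ℕ)-(i:ℕ)-1) else 0) * c (k, a) := by
    intro i a
    induction i using Fin.lastCases with
    | last =>
      rw [hTlast]
      symm
      refine Finset.sum_eq_zero fun k _ => ?_
      rw [if_neg (by simpa using Fin.is_le k), zero_mul]
    | cast j =>
      rw [hTcast]
      simp only [hq, Fin.coe_castSucc]
  have hSval : ∀ (i : Fin (n+1)) (a : Fin p), S (i, a) =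
      ∑ k : Fin (n+1), (if (i:ℕ) ≤ (k:ℕ) ∧ 1 ≤ (i:ℕ) then om ^ ((k:ℕ)-(i:ℕ)) else 0) * c (k, a) := by
    intro i a
    induction i using Fin.cases with
    | zero =>
      rw [hS0]
      symm
      refine Finset.sum_eq_zero fun k _ => ?_
      rw [if_neg (by simp), zero_mul]
    | succ j =>
      rw [hSsucc]
      simp only [hq, Fin.val_succ]
      refine Finset.sum_congr rfl fun k _ => ?_
      congr 1
      by_cases h : (j:ℕ) < (k:ℕ)
      · rw [if_pos h, if_pos ⟨h, by omega⟩]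
        congr 1
      · rw [if_neg h, if_neg (by omega)]
  have hdec : ∀ x : Idx n p, c x = S x - om * T x := by
    rintro ⟨i, a⟩
    rw [hSval, hTval, Finset.mul_sum, ← Finset.sum_sub_distrib]
    by_cases hi : (i:ℕ) = 0
    · have hi0 : i = 0 := Fin.ext hi
      subst hi0
      have step : ∀ k : Fin (n+1),
          (if (0:Fin (n+1)).val ≤ (k:ℕ) ∧ 1 ≤ (0:Fin (n+1)).val then om ^ ((k:ℕ)-(0:Fin (n+1)).val) else 0) * c (k,a)
            - om * ((if (0:Fin (n+1)).val < (k:ℕ) then om ^ ((k:ℕ)-(0:Fin (n+1)).val-1) else 0) * c (k,a))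
          = (if k = 0 then c (k, a) else 0) - om ^ (k:ℕ) * c (k, a) := by
        intro k
        by_cases hk : (k:ℕ) = 0
        · have : k = 0 := Fin.ext hk
          subst this
          simp
        · rw [if_neg (by simp), if_pos (by simp [Fin.val_zero]; omega),
            if_neg (fun h => hk (by simpa using congrArg Fin.val h))]
          have : (k:ℕ) - (0:Fin (n+1)).val - 1 = (k:ℕ) - 1 := by simp
          rw [this]
          have hpow : om ^ (k:ℕ) = om * om ^ ((k:ℕ) - 1) := by
            conv_lhs => rw [show (k:ℕ) = ((k:ℕ)-1)+1 by omega]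
            rw [pow_succ]
            ring
          rw [hpow]
          ring
      rw [Finset.sum_congr rfl fun k _ => step k, Finset.sum_sub_distrib]
      rw [Finset.sum_ite_eq' Finset.univ (0 : Fin (n+1)) (fun k => c (k, a))]
      simp only [Finset.mem_univ, if_pos]
      have := hc0 a
      -- goal : c (0,a) = c (0,a) - ∑ k, om ^ k * c (k,a)
      rw [this]
      ring
    · have step : ∀ k : Fin (n+1),
          (if (i:ℕ) ≤ (k:ℕ) ∧ 1 ≤ (i:ℕ) then om ^ ((k:ℕ)-(i:ℕ)) else 0) * c (k,a)
            - om * ((if (i:ℕ) < (k:ℕ) then om ^ ((k:ℕ)-(i:ℕ)-1) else 0) * c (k,a))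
          = (if k = i then c (k, a) else 0) := by
        intro k
        rcases lt_trichotomy ((k:ℕ)) ((i:ℕ)) with h | h | h
        · rw [if_neg (by omega), if_neg (by omega), if_neg (fun hh => by
            have := congrArg Fin.val hh; omega)]
          ring
        · have : k = i := Fin.ext h
          subst this
          rw [if_pos ⟨le_refl _, by omega⟩, if_neg (by omega), if_pos rfl]
          simp
        · rw [if_pos ⟨by omega, by omega⟩, if_pos h, if_neg (fun hh => by
            have := congrArg Fin.val hh; omega)]
          have hpow : om ^ ((k:ℕ)-(i:ℕ)) = om * om ^ ((k:ℕ) - (i:ℕ) - 1) := by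
            conv_lhs => rw [show (k:ℕ)-(i:ℕ) = ((k:ℕ)-(i:ℕ)-1)+1 by omega]
            rw [pow_succ]
            ring
          rw [hpow]
          ring
      rw [Finset.sum_congr rfl fun k _ => step k,
        Finset.sum_ite_eq' Finset.univ i (fun k => c (k, a))]
      simp
  have hc_eq : c = S - om • T := funext fun x => by
    rw [hdec x]; simp
  set B : (Idx n p → ℂ) → (Idx n p → ℂ) → ℂ :=
    fun x y => dotProduct (star x) (G *ᵥ y) with hB
  have expandS : ∀ f g : Idx n p → ℂ, (∀ a, f (0,a) = 0) → (∀ a, g (0,a) = 0) →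
      B f g = ∑ j : Fin n, ∑ a : Fin p, ∑ j' : Fin n, ∑ b : Fin p,
        conj (f (j.succ, a)) * (G (j.succ,a) (j'.succ,b) * g (j'.succ, b)) := by
    intro f g hf hg
    have inner : ∀ u : Idx n p, (G *ᵥ g) u
        = ∑ j' : Fin n, ∑ b : Fin p, G u (j'.succ,b) * g (j'.succ,b) := fun u => by
      show dotProduct (G u) g = _
      rw [dotProduct]
      exact sum_zero_block _ (fun b => by rw [hg b, mul_zero])
    calc B f g = ∑ u : Idx n p, conj (f u) * (G *ᵥ g) u := by
          simp only [hB, dotProduct, Pi.star_apply, Complex.star_def]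
      _ = _ := by
          rw [sum_zero_block (fun u => conj (f u) * (G *ᵥ g) u)
            (fun a => by simp [hf a])]
          refine Finset.sum_congr rfl fun j _ => Finset.sum_congr rfl fun a _ => ?_
          rw [inner, Finset.mul_sum]
          exact Finset.sum_congr rfl fun j' _ => by rw [Finset.mul_sum]
  have expandT : ∀ f g : Idx n p → ℂ, (∀ a, f (Fin.last n,a) = 0) → (∀ a, g (Fin.last n,a) = 0) →
      B f g = ∑ j : Fin n, ∑ a : Fin p, ∑ j' : Fin n, ∑ b : Fin p,
        conj (f (j.castSucc, a)) * (G (j.castSucc,a) (j'.castSucc,b) * g (j'.castSucc, b)) := by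
    intro f g hf hg
    have inner : ∀ u : Idx n p, (G *ᵥ g) u
        = ∑ j' : Fin n, ∑ b : Fin p, G u (j'.castSucc,b) * g (j'.castSucc,b) := fun u => by
      show dotProduct (G u) g = _
      rw [dotProduct]
      exact sum_last_block _ (fun b => by rw [hg b, mul_zero])
    calc B f g = ∑ u : Idx n p, conj (f u) * (G *ᵥ g) u := by
          simp only [hB, dotProduct, Pi.star_apply, Complex.star_def]
      _ = _ := by
          rw [sum_last_block (fun u => conj (f u) * (G *ᵥ g) u)
            (fun a => by simp [hf a])]
          refine Finset.sum_congr rfl fun j _ => Finset.sum_congr rfl fun a _ => ?_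
          rw [inner, Finset.mul_sum]
          exact Finset.sum_congr rfl fun j' _ => by rw [Finset.mul_sum]
  have hBSS : B S S = B T T := by
    rw [expandS S S hS0 hS0, expandT T T hTlast hTlast]
    refine Finset.sum_congr rfl fun j _ => Finset.sum_congr rfl fun a _ =>
      Finset.sum_congr rfl fun j' _ => Finset.sum_congr rfl fun b _ => ?_
    rw [hSsucc, hSsucc, hTcast, hTcast, hT j j' a b]
  have hBSc : B S c = 0 := by
    simp only [hB]
    rw [hGc, dotProduct]
    rw [sum_zero_block (fun u => star S u * w u)
      (fun a => by simp [hS0 a])]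
    refine Finset.sum_eq_zero fun j _ => Finset.sum_eq_zero fun a _ => ?_
    have : w (j.succ, a) = 0 := by simp [hw, Fin.succ_ne_zero]
    rw [this, mul_zero]
  have hconjB : ∀ x y, conj (B x y) = B y x := by
    intro x y
    simp only [hB]
    calc conj (dotProduct (star x) (G *ᵥ y))
        = star (dotProduct (star x) (G *ᵥ y)) := rfl
      _ = dotProduct (star (G *ᵥ y)) x := (Matrix.star_dotProduct _ _).symm
      _ = dotProduct (Matrix.vecMul (star y) Gᴴ) x := by rw [Matrix.star_mulVec]
      _ = dotProduct (Matrix.vecMul (star y) G) x := by rw [hG.isHermitian.eq]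
      _ = dotProduct (star y) (G *ᵥ x) := (Matrix.dotProduct_mulVec _ _ _).symm
  have hBlinR : ∀ x, B x c = B x S - om * B x T := by
    intro x
    simp only [hB, hc_eq]
    rw [Matrix.mulVec_sub, Matrix.mulVec_smul, dotProduct_sub, dotProduct_smul,
      smul_eq_mul]
  have hBlinL : ∀ y, B c y = B S y - conj om * B T y := by
    intro y
    simp only [hB, hc_eq]
    rw [star_sub, star_smul, sub_dotProduct, smul_dotProduct]
    simp [smul_eq_mul]
  set nu : ℂ := B T T with hnu
  have hnuge : (0:ℂ) ≤ nu := by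
    have := hG.posSemidef.dotProduct_mulVec_nonneg T
    simpa [hB, hnu] using this
  have him : nu.im = 0 := ((Complex.le_def).1 hnuge).2.symm
  have hre : 0 ≤ nu.re := ((Complex.le_def).1 hnuge).1
  have hconjnu : conj nu = nu := Complex.conj_eq_iff_im.2 him
  have hSTnu : om * B S T = nu := by
    have h0 := hBlinR S
    rw [hBSc, hBSS] at h0
    linear_combination h0
  have hTSnu : conj om * B T S = nu := by
    have h := congrArg (starRingEnd ℂ) hSTnu
    rw [_root_.map_mul, hconjB, hconjnu] at h
    exact h
  have hBcc : B c c = (Complex.normSq om : ℂ) * nu - nu := by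
    calc B c c = 0 - conj om * (B T S - om * nu) := by
          rw [hBlinL c, hBSc, hBlinR T]
      _ = (conj om * om) * nu - conj om * B T S := by ring
      _ = (Complex.normSq om : ℂ) * nu - nu := by
          rw [hTSnu, ← Complex.normSq_eq_conj_mul_self]
  have hcne : c ≠ 0 := by
    intro h
    have hw0 : w = 0 := by rw [← hGc, h, Matrix.mulVec_zero]
    obtain ⟨a, ha⟩ := Function.ne_iff.1 hv
    have h2 := congrFun hw0 ((0 : Fin (n+1)), a)
    simp [hw] at h2
    exact ha h2
  have hpos : (0:ℂ) < B c c := by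
    have := hG.dotProduct_mulVec_pos hcne
    simpa [hB] using this
  rw [hBcc, Complex.lt_def] at hpos
  have h1 : (0:ℂ).re < ((Complex.normSq om : ℂ) * nu - nu).re := hpos.1
  have hval : ((Complex.normSq om : ℂ) * nu - nu).re = (Complex.normSq om - 1) * nu.re := by
    simp [Complex.sub_re, Complex.mul_re, him]
    ring
  rw [hval] at h1
  have hsq : Complex.normSq om ≤ 1 := by
    have h := Complex.sq_norm om
    nlinarith [norm_nonneg om]
  simp only [Complex.zero_re] at h1
  nlinarith


theorem stmt15 (p n : ℕ) (hp : 0 < p) (hn : 0 < n)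
    (G : Matrix (Idx n p) (Idx n p) ℂ) (hG : G.PosDef) (hT : BlockToeplitz n p G)
    (om : ℂ) (hom : ‖om‖ ≤ 1) :
    IsUnit (Matrix.of fun a b : Fin p =>
        ∑ j : Fin (n + 1), om ^ (j : ℕ) * G⁻¹ (j, a) ((0 : Fin (n + 1)), b)) ∧
      IsUnit (Matrix.of fun a b : Fin p =>
        ∑ k : Fin (n + 1), om ^ (n - (k : ℕ)) * G⁻¹ (k, a) (Fin.last n, b)) := by
  classical
  refine ⟨key p n G hG hT om hom, ?_⟩
  set e : Idx n p ≃ Idx n p := Equiv.prodCongr Fin.revPerm (Equiv.refl (Fin p)) with he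
  have heapp : ∀ x : Idx n p, e x = (x.1.rev, x.2) := fun x => rfl
  have hesymm : ∀ x : Idx n p, e.symm x = (x.1.rev, x.2) := fun x => rfl
  have hGd' : (G.submatrix e e).PosDef := by
    refine Matrix.PosDef.of_dotProduct_mulVec_pos (hG.isHermitian.submatrix e) fun x hx => ?_
    have hx' : x ∘ e.symm ≠ 0 := by
      intro h
      apply hx
      funext i
      have := congrFun h (e i)
      simpa using this
    have hpos := hG.dotProduct_mulVec_pos hx'
    have heq : dotProduct (star x) (G.submatrix e e *ᵥ x)
        = dotProduct (star (x ∘ e.symm)) (G *ᵥ (x ∘ e.symm)) := by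
      rw [Matrix.submatrix_mulVec_equiv]
      rw [dotProduct, dotProduct]
      rw [← Equiv.sum_comp e.symm (fun u => star (x ∘ e.symm) u * (G *ᵥ (x ∘ e.symm)) u)]
      refine Finset.sum_congr rfl fun u _ => ?_
      simp [Function.comp, Pi.star_apply, heapp, hesymm, Fin.rev_rev]
    rw [heq]
    exact hpos
  have hT' : BlockToeplitz n p (G.submatrix e e) := by
    intro i j a b
    simp only [Matrix.submatrix_apply, heapp]
    rw [Fin.rev_succ, Fin.rev_succ, Fin.rev_castSucc, Fin.rev_castSucc]
    exact (hT i.rev j.rev a b).symm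
  have h2 := key p n (G.submatrix e e) hGd' hT' om hom
  have hinv : (G.submatrix e e)⁻¹ = G⁻¹.submatrix e e := Matrix.inv_submatrix_equiv G e e
  have hmat : (Matrix.of fun a b : Fin p =>
        ∑ k : Fin (n + 1), om ^ (n - (k : ℕ)) * G⁻¹ (k, a) (Fin.last n, b))
      = (Matrix.of fun a b : Fin p =>
        ∑ j : Fin (n + 1), om ^ (j : ℕ) * (G.submatrix e e)⁻¹ (j, a) ((0 : Fin (n + 1)), b)) := by
    ext a b
    simp only [Matrix.of_apply, hinv, Matrix.submatrix_apply, heapp]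
    refine (Fintype.sum_bijective Fin.rev Fin.rev_bijective _ _ fun j => ?_).symm
    show om ^ (j : ℕ) * G⁻¹ ((j, a).1.rev, (j, a).2) (((0 : Fin (n+1)), b).1.rev, ((0 : Fin (n+1)), b).2)
        = om ^ (n - ((j.rev : Fin (n+1)) : ℕ)) * G⁻¹ (j.rev, a) (Fin.last n, b)
    have hj : n - ((j.rev : Fin (n+1)) : ℕ) = (j : ℕ) := by
      have := Fin.is_le j
      simp only [Fin.val_rev]
      omega
    rw [hj]
    simp [Fin.rev_zero]
  rw [hmat]
  exact h2

end
end

section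
/- If G is block Hankel and α ∈ ℂ with Im α > 0, then the p×p matrix F(λ)ΓF(α)* is invertible for every λ ∈ ℂ with Im λ ≥ 0. -/
open Matrix Complex
open scoped ComplexConjugate ComplexOrder

noncomputable section

/-- `G` is block Hankel: `g_{i+1,j} = g_{i,j+1}` for `0 ≤ i,j ≤ n−1`. -/
def BlockHankel (n p : ℕ) (G : Matrix (Idx n p) (Idx n p) ℂ) : Prop :=
  ∀ (i j : Fin n) (a b : Fin p),
    G (i.succ, a) (j.castSucc, b) = G (i.castSucc, a) (j.succ, b)

def iota (n p : ℕ) (h : Fin n × Fin p → ℂ) : Idx n p → ℂ :=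
  fun jk => if hj : (jk.1 : ℕ) < n then h (⟨jk.1, hj⟩, jk.2) else 0

def shft (n p : ℕ) (h : Fin n × Fin p → ℂ) : Idx n p → ℂ :=
  fun jk => if hj : 0 < (jk.1 : ℕ) then h (⟨(jk.1 : ℕ) - 1, by have := jk.1.isLt; omega⟩, jk.2) else 0

lemma Fm_mulVec (n p : ℕ) (lam : ℂ) (x : Idx n p → ℂ) (a : Fin p) :
    (Fm n p lam *ᵥ x) a = ∑ j : Fin (n+1), lam ^ (j : ℕ) * x (j, a) := by
  simp only [Matrix.mulVec, dotProduct, Fm, Matrix.of_apply, Fintype.sum_prod_type]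
  refine Finset.sum_congr rfl fun j _ => ?_
  rw [Finset.sum_eq_single a]
  · simp
  · intro b _ hb; simp [hb]
  · simp

lemma Fm_mulVec_shft (n p : ℕ) (lam : ℂ) (h : Fin n × Fin p → ℂ) (a : Fin p) :
    (Fm n p lam *ᵥ shft n p h) a = lam * (Fm n p lam *ᵥ iota n p h) a := by
  rw [Fm_mulVec, Fm_mulVec]
  rw [Fin.sum_univ_succ, Fin.sum_univ_castSucc]
  simp only [shft, iota, Fin.val_zero, Fin.val_succ, Fin.coe_castSucc, Fin.val_last,
    Nat.add_sub_cancel]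
  erw [dif_neg (Nat.lt_irrefl 0), dif_neg (Nat.lt_irrefl n)]
  simp only [Nat.zero_lt_succ, dif_pos, Fin.is_lt, Fin.eta, mul_zero, add_zero, pow_zero,
    one_mul, mul_zero, zero_add, Finset.mul_sum]
  refine Finset.sum_congr rfl fun j _ => ?_
  ring

lemma hankel_sym (n p : ℕ) (G : Matrix (Idx n p) (Idx n p) ℂ) (hH : BlockHankel n p G)
    (x y : Fin n × Fin p → ℂ) :
    star (iota n p x) ⬝ᵥ (G *ᵥ shft n p y) = star (shft n p x) ⬝ᵥ (G *ᵥ iota n p y) := by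
  simp only [dotProduct, Matrix.mulVec, Fintype.sum_prod_type, Pi.star_apply]
  rw [Fin.sum_univ_castSucc (n := n)]
  conv_rhs => rw [Fin.sum_univ_succ]
  simp only [iota, shft, Fin.coe_castSucc, Fin.val_last, Fin.val_succ,
    Nat.add_sub_cancel]
  have e0 : ∀ q, (if h : 0 < ((0 : Fin (n+1)) : ℕ) then x (⟨((0 : Fin (n+1)) : ℕ) - 1, by omega⟩, q) else 0) = 0 := fun q => dif_neg (by simp)
  simp only [e0]
  simp only [lt_self_iff_false, dite_false]
  simp only [Nat.zero_lt_succ, dif_pos, Fin.is_lt, Fin.eta, star_zero, zero_mul,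
    Finset.sum_const_zero, add_zero, zero_add]
  refine Finset.sum_congr rfl fun i _ => Finset.sum_congr rfl fun a _ => ?_
  congr 1
  -- now sums over (j,b)
  rw [Fin.sum_univ_succ (n := n)]
  conv_rhs => rw [Fin.sum_univ_castSucc (n := n)]
  simp only [Fin.val_succ, Fin.coe_castSucc, Fin.val_last, Nat.add_sub_cancel]
  have e1 : ∀ q, (if h : 0 < ((0 : Fin (n+1)) : ℕ) then y (⟨((0 : Fin (n+1)) : ℕ) - 1, by omega⟩, q) else 0) = 0 := fun q => dif_neg (by simp)
  simp only [e1]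
  simp only [lt_self_iff_false, dite_false]
  simp only [Nat.zero_lt_succ, dif_pos, Fin.is_lt, Fin.eta, mul_zero,
    Finset.sum_const_zero, zero_add, add_zero]
  refine Finset.sum_congr rfl fun j _ => Finset.sum_congr rfl fun b _ => ?_
  rw [hH i j a b]
lemma div_lemma (n p : ℕ) (hn : 0 < n) (lam : ℂ) (d : Idx n p → ℂ)
    (hev : ∀ a : Fin p, ∑ j : Fin (n+1), lam ^ (j : ℕ) * d (j, a) = 0) :
    ∃ h : Fin n × Fin p → ℂ,
      d = fun jk => shft n p h jk - lam * iota n p h jk := by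
  refine ⟨fun jk => ∑ k : Fin (n+1),
      (if (jk.1 : ℕ) + 1 ≤ (k : ℕ) then lam ^ ((k : ℕ) - 1 - (jk.1 : ℕ)) else 0) * d (k, jk.2),
    ?_⟩
  funext jk
  obtain ⟨j, a⟩ := jk
  have hj' := j.isLt
  simp only [shft, iota]
  by_cases h0 : (j : ℕ) = 0
  · rw [dif_neg (by omega), dif_pos (by omega)]
    have h1 : lam * ∑ k : Fin (n+1),
        (if (((⟨(j:ℕ), by omega⟩ : Fin n) : ℕ)) + 1 ≤ (k : ℕ) then
          lam ^ ((k : ℕ) - 1 - ((⟨(j:ℕ), by omega⟩ : Fin n) : ℕ)) else 0) * d (k, a)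
        = ∑ k : Fin (n+1), (if 1 ≤ (k : ℕ) then lam ^ (k : ℕ) else 0) * d (k, a) := by
      rw [Finset.mul_sum]
      refine Finset.sum_congr rfl fun k _ => ?_
      simp only [h0]
      by_cases hk : 1 ≤ (k : ℕ)
      · rw [if_pos (by omega), if_pos hk, ← mul_assoc, ← pow_succ']
        congr 2
        omega
      · rw [if_neg (by omega), if_neg hk]; ring
    rw [h1]
    have h2 : ∑ k : Fin (n+1), (if 1 ≤ (k : ℕ) then lam ^ (k : ℕ) else 0) * d (k, a)
        = (∑ k : Fin (n+1), lam ^ (k : ℕ) * d (k, a)) - d (0, a) := by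
      rw [Fin.sum_univ_succ, Fin.sum_univ_succ]
      simp only [Fin.val_zero, Fin.val_succ, pow_zero, one_mul]
      rw [if_neg (by omega)]
      have hk : ∀ x : Fin n, (if 1 ≤ (x : ℕ) + 1 then lam ^ ((x : ℕ) + 1) else 0) * d (x.succ, a)
          = lam ^ ((x : ℕ) + 1) * d (x.succ, a) := fun x => by rw [if_pos (by omega)]
      simp only [hk]
      ring
    have hj0 : j = (0 : Fin (n+1)) := by
      apply Fin.ext; simpa using h0
    rw [h2, hev a, zero_sub, zero_sub, neg_neg, hj0]
  · by_cases hjn : (j : ℕ) = n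
    · rw [dif_pos (by omega), dif_neg (by omega), mul_zero, sub_zero]
      rw [Finset.sum_eq_single j]
      · rw [if_pos (by omega), Nat.sub_self, pow_zero, one_mul]
      · intro k _ hk
        have hkj : (k : ℕ) ≠ (j : ℕ) := fun h => hk (Fin.ext h)
        have hk' := k.isLt
        rw [if_neg (by omega), zero_mul]
      · intro hju; exact absurd (Finset.mem_univ j) hju
    · rw [dif_pos (by omega), dif_pos (by omega)]
      rw [Finset.mul_sum, ← Finset.sum_sub_distrib]
      rw [Finset.sum_eq_single j]
      · rw [if_pos (by omega), if_neg (by omega),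
          Nat.sub_self, pow_zero, one_mul]
        ring
      · intro k _ hk
        have hkj : (k : ℕ) ≠ (j : ℕ) := fun h => hk (Fin.ext h)
        have hk' := k.isLt
        by_cases hlt : (k : ℕ) < (j : ℕ)
        · rw [if_neg (by omega), if_neg (by omega)]
          ring
        · have hgt : (j : ℕ) < (k : ℕ) := by omega
          rw [if_pos (by omega), if_pos (by omega)]
          have he : (k : ℕ) - 1 - ((j : ℕ) - 1) = ((k : ℕ) - 1 - (j : ℕ)) + 1 := by omega
          rw [he, pow_succ']
          ring
      · intro hju; exact absurd (Finset.mem_univ j) hju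

lemma herm_conj {m : Type*} [Fintype m] (G : Matrix m m ℂ) (hG : G.IsHermitian)
    (x y : m → ℂ) : star y ⬝ᵥ (G *ᵥ x) = (starRingEnd ℂ) (star x ⬝ᵥ (G *ᵥ y)) := by
  calc star y ⬝ᵥ (G *ᵥ x) = (star y ᵥ* G) ⬝ᵥ x := dotProduct_mulVec _ _ _
    _ = (star y ᵥ* Gᴴ) ⬝ᵥ x := by rw [hG.eq]
    _ = star (G *ᵥ y) ⬝ᵥ x := by rw [star_mulVec]
    _ = star (star x ⬝ᵥ (G *ᵥ y)) := by rw [star_dotProduct]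
    _ = (starRingEnd ℂ) (star x ⬝ᵥ (G *ᵥ y)) := rfl

lemma cs_lemma {m : Type*} [Fintype m] (G : Matrix m m ℂ) (hG : G.PosSemidef)
    (x y : m → ℂ) (hy : 0 < (star y ⬝ᵥ (G *ᵥ y)).re) :
    Complex.normSq (star x ⬝ᵥ (G *ᵥ y)) ≤
      (star x ⬝ᵥ (G *ᵥ x)).re * (star y ⬝ᵥ (G *ᵥ y)).re := by
  set β := star x ⬝ᵥ (G *ᵥ y) with hβ
  set N := star y ⬝ᵥ (G *ᵥ y) with hNd
  have hNim : N.im = 0 := by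
    have := hG.dotProduct_mulVec_nonneg y
    rw [Complex.nonneg_iff] at this
    exact this.2.symm
  have hNreal : N = ((N.re : ℝ) : ℂ) := Complex.ext (by simp) (by simp [hNim])
  have hNne : (N : ℂ) ≠ 0 := by
    rw [hNreal]; simpa using hy.ne'
  have hconjN : (starRingEnd ℂ) N = N := by rw [hNreal]; simp
  set t : ℂ := -(starRingEnd ℂ) β / N with ht
  have h0 : 0 ≤ star (x + t • y) ⬝ᵥ (G *ᵥ (x + t • y)) := hG.dotProduct_mulVec_nonneg _
  have hyx : star y ⬝ᵥ (G *ᵥ x) = (starRingEnd ℂ) β := herm_conj G hG.1 x y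
  have hsq : β * (starRingEnd ℂ) β = (Complex.normSq β : ℂ) := by
    rw [mul_comm, Complex.normSq_eq_conj_mul_self]
  have hexp : star (x + t • y) ⬝ᵥ (G *ᵥ (x + t • y))
      = (star x ⬝ᵥ (G *ᵥ x)) - (Complex.normSq β : ℂ) / N := by
    rw [star_add, star_smul, Matrix.mulVec_add, Matrix.mulVec_smul]
    rw [add_dotProduct, dotProduct_add, dotProduct_add, smul_dotProduct, dotProduct_smul,
      dotProduct_smul, smul_dotProduct]
    rw [hyx, ← hβ, ← hNd]
    simp only [smul_eq_mul, Complex.star_def]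
    rw [ht]
    field_simp
    rw [← hsq]
    ring
  rw [hexp, Complex.nonneg_iff] at h0
  have h1 : ((Complex.normSq β : ℂ) / N).re = Complex.normSq β / N.re := by
    rw [hNreal]
    rw [← Complex.ofReal_div]
    simp
  have h2 := h0.1
  rw [Complex.sub_re, h1] at h2
  have h3 : Complex.normSq β / N.re ≤ (star x ⬝ᵥ (G *ᵥ x)).re := by linarith
  exact (div_le_iff₀ hy).mp h3

set_option maxHeartbeats 2000000 in
theorem stmt16 (p n : ℕ) (hp : 0 < p) (hn : 0 < n)
    (G : Matrix (Idx n p) (Idx n p) ℂ) (hG : G.PosDef) (hH : BlockHankel n p G)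
    (α : ℂ) (hα : 0 < α.im) :
    ∀ lam : ℂ, 0 ≤ lam.im → IsUnit (Fm n p lam * G⁻¹ * (Fm n p α)ᴴ) := by
  intro lam hlam
  by_contra hunit
  have hdet : (Fm n p lam * G⁻¹ * (Fm n p α)ᴴ).det = 0 := by
    by_contra hd
    exact hunit ((Matrix.isUnit_iff_isUnit_det _).2 (isUnit_iff_ne_zero.2 hd))
  obtain ⟨η, hη, hMη⟩ := Matrix.exists_mulVec_eq_zero_iff.2 hdet
  set t : Idx n p → ℂ := (Fm n p α)ᴴ *ᵥ η with htdef
  set d : Idx n p → ℂ := G⁻¹ *ᵥ t with hddef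
  have hinv := hG.isUnit.invertible
  have hGd : G *ᵥ d = t := by
    rw [hddef, Matrix.mulVec_mulVec, Matrix.mul_inv_of_invertible, Matrix.one_mulVec]
  have hFd : Fm n p lam *ᵥ d = 0 := by
    rw [← Matrix.mulVec_mulVec, ← Matrix.mulVec_mulVec] at hMη
    exact hMη
  -- reproducing property
  have hrep : ∀ x : Idx n p → ℂ,
      star x ⬝ᵥ (G *ᵥ d) = star (Fm n p α *ᵥ x) ⬝ᵥ η := by
    intro x
    rw [hGd, htdef, star_mulVec, dotProduct_mulVec]
  -- division
  have hev : ∀ a : Fin p, ∑ j : Fin (n+1), lam ^ (j : ℕ) * d (j, a) = 0 := by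
    intro a
    rw [← Fm_mulVec n p lam d a, hFd]
    rfl
  obtain ⟨h, hd⟩ := div_lemma n p hn lam d hev
  have hd' : d = shft n p h - lam • iota n p h := by
    funext jk
    rw [hd]
    simp
  -- evaluation of shifted / embedded polys
  have hFshft : ∀ z : ℂ, Fm n p z *ᵥ shft n p h = z • (Fm n p z *ᵥ iota n p h) := by
    intro z
    funext a
    rw [Fm_mulVec_shft]
    rfl
  set u : Fin p → ℂ := Fm n p α *ᵥ iota n p h with hu
  set w : ℂ := star u ⬝ᵥ η with hw
  set N : ℂ := star d ⬝ᵥ (G *ᵥ d) with hN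
  -- evaluation of d at α
  have hFad : Fm n p α *ᵥ d = (α - lam) • u := by
    rw [hd', Matrix.mulVec_sub, Matrix.mulVec_smul, hFshft α, ← hu, sub_smul]
  have hNw : N = (starRingEnd ℂ) (α - lam) * w := by
    rw [hN, hrep d, hFad, star_smul, smul_dotProduct, ← hw]
    rfl
  -- N is real and positive
  have hd0 : d ≠ 0 := by
    intro h0
    obtain ⟨a, ha⟩ := Function.ne_iff.1 hη
    apply ha
    have : t (0, a) = 0 := by rw [← hGd, h0, Matrix.mulVec_zero]; rfl
    rw [htdef] at this
    simpa [Matrix.mulVec, dotProduct, Matrix.conjTranspose_apply, Fm,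
      Finset.sum_eq_single a, apply_ite] using this
  have hNpos : 0 < N := hG.dotProduct_mulVec_pos hd0
  have hNreObj := Complex.pos_iff.1 hNpos
  have hNre : 0 < N.re := hNreObj.1
  have hNim : N.im = 0 := hNreObj.2.symm
  -- quadratic expansion data
  set S : ℂ := star (shft n p h) ⬝ᵥ (G *ᵥ shft n p h) with hS
  set τ : ℂ := star (shft n p h) ⬝ᵥ (G *ᵥ iota n p h) with hτd
  set P : ℂ := star (iota n p h) ⬝ᵥ (G *ᵥ iota n p h) with hP
  have hτ : star (iota n p h) ⬝ᵥ (G *ᵥ shft n p h) = τ := hankel_sym n p G hH h h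
  have hexp : ∀ c : ℂ,
      star (shft n p h - c • iota n p h) ⬝ᵥ (G *ᵥ (shft n p h - c • iota n p h))
        = S - c * τ - (starRingEnd ℂ) c * τ + (starRingEnd ℂ) c * c * P := by
    intro c
    rw [star_sub, star_smul, Matrix.mulVec_sub, Matrix.mulVec_smul]
    rw [sub_dotProduct, dotProduct_sub, dotProduct_sub, smul_dotProduct, dotProduct_smul,
      dotProduct_smul, smul_dotProduct, hτ, ← hS, ← hτd, ← hP]
    simp only [smul_eq_mul, Complex.star_def]
    ring
  have hPnonneg := Complex.nonneg_iff.1 (hG.posSemidef.dotProduct_mulVec_nonneg (iota n p h))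
  have hPre : 0 ≤ P.re := hPnonneg.1
  have hPim : P.im = 0 := hPnonneg.2.symm
  -- the key inequality, for every ε ≥ 0
  have key : ∀ ε : ℝ,
      ((α.re - lam.re)^2 + (α.im + lam.im + ε)^2) * Complex.normSq w ≤
        (N.re + (2*lam.im*ε + ε^2) * P.re) * N.re := by
    intro ε
    set c : ℂ := (starRingEnd ℂ) lam - (ε : ℂ) * Complex.I with hc
    set g : Idx n p → ℂ := shft n p h - c • iota n p h with hg
    -- value of the g-form
    have hBgg : star g ⬝ᵥ (G *ᵥ g) = N + ((2*lam.im*ε + ε^2 : ℝ) : ℂ) * P := by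
      rw [hg, hexp c, hN, hd', hexp lam]
      have hc1 : c + (starRingEnd ℂ) c = lam + (starRingEnd ℂ) lam := by
        rw [hc]
        simp [map_sub, _root_.map_mul, Complex.conj_ofReal, Complex.conj_I]
        ring
      have hc2 : (starRingEnd ℂ) c * c
          = (starRingEnd ℂ) lam * lam + ((2*lam.im*ε + ε^2 : ℝ) : ℂ) := by
        rw [hc]
        apply Complex.ext <;>
          simp [Complex.mul_re, Complex.mul_im, Complex.sub_re, Complex.sub_im,
            ← Complex.ofReal_pow] <;> ring
      calc S - c * τ - (starRingEnd ℂ) c * τ + (starRingEnd ℂ) c * c * P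
          = S - (c + (starRingEnd ℂ) c) * τ + ((starRingEnd ℂ) c * c) * P := by ring
        _ = S - (lam + (starRingEnd ℂ) lam) * τ
              + ((starRingEnd ℂ) lam * lam + ((2*lam.im*ε + ε^2 : ℝ) : ℂ)) * P := by
            rw [hc1, hc2]
        _ = (S - lam * τ - (starRingEnd ℂ) lam * τ + (starRingEnd ℂ) lam * lam * P)
              + ((2*lam.im*ε + ε^2 : ℝ) : ℂ) * P := by ring
    -- value of the cross form
    have hFag : Fm n p α *ᵥ g = (α - c) • u := by
      rw [hg, Matrix.mulVec_sub, Matrix.mulVec_smul, hFshft α, ← hu, hc]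
      module
    have hβ : star g ⬝ᵥ (G *ᵥ d) = (starRingEnd ℂ) (α - c) * w := by
      rw [hrep g, hFag, star_smul, smul_dotProduct, ← hw]
      rfl
    -- Cauchy–Schwarz
    have hcs := cs_lemma G hG.posSemidef g d (by rw [← hN]; exact hNre)
    rw [← hN, hβ, hBgg] at hcs
    have hns : Complex.normSq ((starRingEnd ℂ) (α - c) * w)
        = ((α.re - lam.re)^2 + (α.im + lam.im + ε)^2) * Complex.normSq w := by
      rw [Complex.normSq_mul, Complex.normSq_conj]
      congr 1
      rw [hc]
      simp [Complex.normSq_apply, Complex.sub_re, Complex.sub_im, Complex.mul_re,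
        Complex.mul_im]
      ring
    rw [hns] at hcs
    have hre : (N + ((2*lam.im*ε + ε^2 : ℝ) : ℂ) * P).re
        = N.re + (2*lam.im*ε + ε^2) * P.re := by
      rw [Complex.add_re, Complex.re_ofReal_mul]
    rw [hre] at hcs
    exact hcs
  -- translate |N|^2
  have hnsN : Complex.normSq (α - lam) * Complex.normSq w = N.re ^ 2 := by
    have h1 : Complex.normSq N = N.re ^ 2 := by
      rw [Complex.normSq_apply, hNim]; ring
    rw [← h1, hNw, Complex.normSq_mul, Complex.normSq_conj]
  have hA1 : Complex.normSq (α - lam) = (α.re - lam.re)^2 + (α.im - lam.im)^2 := by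
    rw [Complex.normSq_apply, Complex.sub_re, Complex.sub_im]; ring
  have hA1nn : 0 ≤ Complex.normSq (α - lam) := Complex.normSq_nonneg _
  have hwnn : 0 ≤ Complex.normSq w := Complex.normSq_nonneg _
  -- divide out the common factor
  have step : ∀ ε : ℝ, ((α.re - lam.re)^2 + (α.im + lam.im + ε)^2) * N.re ≤
      Complex.normSq (α - lam) * (N.re + (2*lam.im*ε + ε^2) * P.re) := by
    intro ε
    have h3 := mul_le_mul_of_nonneg_left (key ε) hA1nn
    have h4 : Complex.normSq (α - lam) *
        (((α.re - lam.re)^2 + (α.im + lam.im + ε)^2) * Complex.normSq w)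
        = ((α.re - lam.re)^2 + (α.im + lam.im + ε)^2) * N.re ^ 2 := by
      rw [← hnsN]; ring
    rw [h4] at h3
    have h5 : (((α.re - lam.re)^2 + (α.im + lam.im + ε)^2) * N.re) * N.re ≤
        (Complex.normSq (α - lam) * (N.re + (2*lam.im*ε + ε^2) * P.re)) * N.re := by
      nlinarith [h3]
    exact le_of_mul_le_mul_right h5 hNre
  -- first: lam.im = 0
  have hdd : lam.im = 0 := by
    have h0 := step 0
    rw [hA1] at h0
    have : lam.im ≤ 0 := by
      by_contra hddpos
      push_neg at hddpos
      nlinarith [h0, mul_pos (mul_pos hα hddpos) hNre]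
    exact le_antisymm this hlam
  -- then: contradiction with a small positive ε
  have hA1' : Complex.normSq (α - lam) = (α.re - lam.re)^2 + α.im^2 := by
    rw [hA1, hdd]; ring
  set Q : ℝ := Complex.normSq (α - lam) * P.re with hQ
  have hQnn : 0 ≤ Q := mul_nonneg hA1nn hPre
  have hQN : 0 < Q + N.re := by linarith
  set ε0 : ℝ := α.im * N.re / (Q + N.re) with hε0
  have hε0pos : 0 < ε0 := div_pos (mul_pos hα hNre) hQN
  have hεeq : ε0 * (Q + N.re) = α.im * N.re := div_mul_cancel₀ _ (ne_of_gt hQN)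
  have h6 : ε0 * (ε0 * (Q + N.re)) = ε0 * (α.im * N.re) := by rw [hεeq]
  have final := step ε0
  rw [hA1', hdd] at final
  have h7 : ε0^2 * Q = ε0^2 * (((α.re - lam.re)^2 + α.im^2) * P.re) := by
    rw [hQ, hA1']
  nlinarith [final, h6, h7, hε0pos, hNre, hα, hPre,
    mul_pos hε0pos (mul_pos hα hNre), mul_pos (mul_pos hε0pos hε0pos) hNre]

end
end

section
/- If G is block Toeplitz, then for every ω ∈ ℂ with |ω| ≤ 1 the m×m matrix I_m − ω N₀ G A is invertible, and Γe₀ · (F(ω)Γe₀)^{-1} = (I_m − ωA)(I_m − ω N₀ G A)^{-1} Γe₀ (e₀*Γe₀)^{-1}. -/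
open Matrix Complex
open scoped ComplexConjugate ComplexOrder

noncomputable section

/-- `N₀ = Γ − Γe₀(e₀*Γe₀)⁻¹e₀*Γ`. -/
def N0m (n p : ℕ) (G : Matrix (Idx n p) (Idx n p) ℂ) : Matrix (Idx n p) (Idx n p) ℂ :=
  G⁻¹ - G⁻¹ * Ek n p 0 * ((Ek n p 0)ᴴ * G⁻¹ * Ek n p 0)⁻¹ * (Ek n p 0)ᴴ * G⁻¹

/-- `N_• = Γ − Γe_n(e_n*Γe_n)⁻¹e_n*Γ`. -/
def Nbm (n p : ℕ) (G : Matrix (Idx n p) (Idx n p) ℂ) : Matrix (Idx n p) (Idx n p) ℂ :=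
  G⁻¹ - G⁻¹ * Ek n p (Fin.last n) * ((Ek n p (Fin.last n))ᴴ * G⁻¹ * Ek n p (Fin.last n))⁻¹ *
    (Ek n p (Fin.last n))ᴴ * G⁻¹

/- ----- auxiliary lemmas ----- -/

theorem FmId (n p : ℕ) (om : ℂ) : Fm n p om * (1 - om • Am n p) = (Ek n p 0)ᴴ := by
  ext i jb
  obtain ⟨j, b⟩ := jb
  simp only [Matrix.mul_apply, Matrix.sub_apply, Matrix.smul_apply, Matrix.one_apply,
    Fm, Am, Ek, Matrix.of_apply, Fintype.sum_prod_type, Matrix.conjTranspose_apply,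
    mul_ite, ite_mul, one_mul, mul_one, mul_zero, zero_mul, smul_eq_mul, mul_sub,
    Finset.sum_sub_distrib, Prod.mk.injEq]
  induction j using Fin.cases with
  | zero =>
    simp [ite_and, Finset.sum_ite_eq, Finset.sum_ite_eq', eq_comm]
  | succ j' =>
    have hc : ∀ x : Fin (n+1), (((j'.succ : Fin (n+1)) : ℕ) = (x:ℕ)+1) ↔ x = j'.castSucc := by
      intro x; rw [Fin.ext_iff]; simp [Fin.val_succ]; omega
    simp only [ite_and, Finset.sum_ite_eq, Finset.sum_ite_eq', eq_comm, hc]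
    simp [Finset.sum_ite_eq, Finset.sum_ite_eq', Fin.succ_ne_zero, pow_succ, Fin.val_succ,
      Fin.coe_castSucc]

theorem AmPowEntry (n p k : ℕ) : ∀ x y : Idx n p, ((Am n p)^k) x y ≠ 0 → (y.1:ℕ) = (x.1:ℕ) + k := by
  induction k with
  | zero =>
    intro x y h
    rw [pow_zero] at h
    by_contra hne
    rcases eq_or_ne x y with rfl | hxy
    · omega
    · exact h (Matrix.one_apply_ne hxy)
  | succ k ih =>
    intro x y h
    rw [pow_succ, Matrix.mul_apply] at h
    obtain ⟨l, _, hl⟩ := Finset.exists_ne_zero_of_sum_ne_zero h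
    have h1 := ih x l (left_ne_zero_of_mul hl)
    have h2 : (Am n p) l y ≠ 0 := right_ne_zero_of_mul hl
    simp only [Am, Matrix.of_apply, ne_eq, ite_eq_right_iff, not_forall] at h2
    obtain ⟨⟨h3, -⟩, -⟩ := h2
    omega

theorem AmNilp (n p : ℕ) : (Am n p) ^ (n + 1) = 0 := by
  ext x y
  rw [Matrix.zero_apply]
  by_contra h
  have := AmPowEntry n p (n+1) x y h
  omega

theorem ToepId (n p : ℕ) (G : Matrix (Idx n p) (Idx n p) ℂ) (hT : BlockToeplitz n p G) :
    (Am n p)ᴴ * G * Am n p =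
      G - Ek n p 0 * (Ek n p 0)ᴴ * G - G * Ek n p 0 * (Ek n p 0)ᴴ
        + Ek n p 0 * ((Ek n p 0)ᴴ * G * Ek n p 0) * (Ek n p 0)ᴴ := by
  ext ia jb
  obtain ⟨i, a⟩ := ia
  obtain ⟨j, b⟩ := jb
  simp only [Matrix.mul_apply, Matrix.conjTranspose_apply, Matrix.add_apply, Matrix.sub_apply,
    Am, Ek, Matrix.of_apply, Fintype.sum_prod_type, _root_.map_one, _root_.map_zero,
    mul_ite, ite_mul, one_mul, mul_one, mul_zero, zero_mul, Prod.mk.injEq, ite_and,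
    apply_ite (starRingEnd ℂ), Finset.sum_ite_eq, Finset.sum_ite_eq']
  induction i using Fin.cases with
  | zero =>
    induction j using Fin.cases with
    | zero => simp [Finset.sum_ite_eq, Finset.sum_ite_eq', ite_and]
    | succ j' => simp [Finset.sum_ite_eq, Finset.sum_ite_eq', ite_and, Fin.succ_ne_zero,
        apply_ite (starRingEnd ℂ)]
  | succ i' =>
    have hci : ∀ x : Fin (n+1), (((i'.succ : Fin (n+1)) : ℕ) = (x:ℕ)+1) ↔ x = i'.castSucc := by
      intro x; rw [Fin.ext_iff]; simp [Fin.val_succ]; omega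
    induction j using Fin.cases with
    | zero =>
      simp [Finset.sum_ite_eq, Finset.sum_ite_eq', ite_and, Fin.succ_ne_zero, hci]
    | succ j' =>
      have hcj : ∀ x : Fin (n+1), (((j'.succ : Fin (n+1)) : ℕ) = (x:ℕ)+1) ↔ x = j'.castSucc := by
        intro x; rw [Fin.ext_iff]; simp [Fin.val_succ]; omega
      simp only [hci, hcj, ite_and, Finset.sum_ite_eq, Finset.sum_ite_eq']
      simp [Finset.sum_ite_eq, Finset.sum_ite_eq', Fin.succ_ne_zero,
        apply_ite (starRingEnd ℂ), ite_and, hT i' j' a b]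

theorem EkInj (n p : ℕ) {x : Fin p → ℂ} (h : Ek n p 0 *ᵥ x = 0) : x = 0 := by
  funext l
  have := congrFun h (0, l)
  simpa [Ek, Matrix.mulVec, dotProduct] using this

theorem star_vecMul_eq {m' n' : Type*} [Fintype m'] [Fintype n'] (M : Matrix m' n' ℂ)
    (z : m' → ℂ) : star z ᵥ* M = star (Mᴴ *ᵥ z) := by
  rw [Matrix.star_mulVec, Matrix.conjTranspose_conjTranspose]

theorem real_aux {t a b : ℝ} (ht0 : 0 < t) (ht1 : t ≤ 1) (ha : 0 ≤ a) (hb : 0 ≤ b)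
    (h : a = t * (a - b)) : b = 0 := by nlinarith

theorem mulVec_eq_zero_of_isUnit {m' : Type*} [Fintype m'] [DecidableEq m']
    {M : Matrix m' m' ℂ} (h : IsUnit M.det) {v : m' → ℂ} (hv : M *ᵥ v = 0) : v = 0 := by
  by_contra hv0
  exact h.ne_zero (Matrix.exists_mulVec_eq_zero_iff.mp ⟨v, hv0, hv⟩)

theorem stmt18 (p n : ℕ) (hp : 0 < p) (hn : 0 < n)
    (G : Matrix (Idx n p) (Idx n p) ℂ) (hG : G.PosDef) (hT : BlockToeplitz n p G)
    (om : ℂ) (hom : ‖om‖ ≤ 1) :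
    IsUnit (1 - om • (N0m n p G * G * Am n p)) ∧
      G⁻¹ * Ek n p 0 * (Fm n p om * G⁻¹ * Ek n p 0)⁻¹ =
        (1 - om • Am n p) * (1 - om • (N0m n p G * G * Am n p))⁻¹ * (G⁻¹ * Ek n p 0) *
          ((Ek n p 0)ᴴ * G⁻¹ * Ek n p 0)⁻¹ := by
  classical
  set E : Matrix (Idx n p) (Fin p) ℂ := Ek n p 0 with hEdef
  set A : Matrix (Idx n p) (Idx n p) ℂ := Am n p with hAdef
  set Γ : Matrix (Idx n p) (Idx n p) ℂ := G⁻¹ with hΓdef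
  set c : Matrix (Fin p) (Fin p) ℂ := Eᴴ * Γ * E with hcdef
  set N : Matrix (Idx n p) (Idx n p) ℂ := N0m n p G with hNdef
  have hGH : Gᴴ = G := hG.1
  have hGd : IsUnit G.det := (Matrix.isUnit_iff_isUnit_det G).mp hG.isUnit
  have hGΓ : G * Γ = 1 := Matrix.mul_nonsing_inv G hGd
  have hΓG : Γ * G = 1 := Matrix.nonsing_inv_mul G hGd
  have hΓpd : Γ.PosDef := hG.inv
  have hΓH : Γᴴ = Γ := hΓpd.1
  -- c is positive definite
  have hcpd : c.PosDef := by
    refine PosDef.of_dotProduct_mulVec_pos (Matrix.isHermitian_conjTranspose_mul_mul E hΓpd.1) fun x hx => ?_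
    have hEx : E *ᵥ x ≠ 0 := fun h => hx (EkInj n p h)
    simpa only [hcdef, star_mulVec, dotProduct_mulVec, vecMul_vecMul] using hΓpd.dotProduct_mulVec_pos hEx
  have hcd : IsUnit c.det := (Matrix.isUnit_iff_isUnit_det c).mp hcpd.isUnit
  have hcc : c⁻¹ * c = 1 := Matrix.nonsing_inv_mul c hcd
  have hcc' : c * c⁻¹ = 1 := Matrix.mul_nonsing_inv c hcd
  have hcinv : (c⁻¹).PosDef := hcpd.inv
  have hciH : (c⁻¹)ᴴ = c⁻¹ := hcpd.1.inv
  -- facts about N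
  have hNun : N = Γ - Γ * E * c⁻¹ * Eᴴ * Γ := rfl
  have hcc1 : c⁻¹ * (Eᴴ * (Γ * E)) = 1 := by
    rw [show Eᴴ * (Γ * E) = c by rw [hcdef, Matrix.mul_assoc]]
    exact hcc
  have hNE : N * E = 0 := by
    rw [hNun, Matrix.sub_mul]
    simp only [Matrix.mul_assoc]
    rw [hcc1, Matrix.mul_one, sub_self]
  have hEN : Eᴴ * N = 0 := by
    rw [hNun, Matrix.mul_sub]
    rw [show Eᴴ * (Γ * E * c⁻¹ * Eᴴ * Γ) = Eᴴ * Γ * E * c⁻¹ * (Eᴴ * Γ) by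
      simp only [Matrix.mul_assoc]]
    rw [← hcdef, hcc', Matrix.one_mul, sub_self]
  have hNGr : N * G = 1 - Γ * (E * (c⁻¹ * Eᴴ)) := by
    rw [hNun, Matrix.sub_mul]
    simp only [Matrix.mul_assoc]
    rw [hΓG, Matrix.mul_one]
  have hNH : Nᴴ = N := by
    rw [hNun]
    simp [Matrix.conjTranspose_sub, Matrix.conjTranspose_mul, hΓH, hciH, Matrix.mul_assoc]
  have hNGN : N * G * N = N := by
    rw [hNGr, Matrix.sub_mul, Matrix.one_mul]
    simp only [Matrix.mul_assoc]
    rw [hEN]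
    simp
  have hGNG : G * N * G = G - E * (c⁻¹ * Eᴴ) := by
    rw [Matrix.mul_assoc, hNGr, Matrix.mul_sub, Matrix.mul_one, ← Matrix.mul_assoc, hGΓ,
      Matrix.one_mul]
  -- B = 1 - om • A is invertible
  have hBu : IsUnit (1 - om • A) := by
    refine IsNilpotent.isUnit_one_sub ⟨n+1, ?_⟩
    rw [smul_pow, hAdef, AmNilp, smul_zero]
  have hBd : IsUnit (1 - om • A).det := (Matrix.isUnit_iff_isUnit_det _).mp hBu
  -- the energy argument : 1 - om • (N*G*A) is invertible
  have hMu : IsUnit (1 - om • (N * G * A)) := by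
    rw [Matrix.isUnit_iff_isUnit_det, isUnit_iff_ne_zero]
    intro hdet
    obtain ⟨v, hv0, hv⟩ := Matrix.exists_mulVec_eq_zero_iff.mpr hdet
    set w : Idx n p → ℂ := A *ᵥ v with hw
    have hveq : v = om • ((N * G) *ᵥ w) := by
      have h1 : (1 - om • (N * G * A)) *ᵥ v = v - om • ((N * G * A) *ᵥ v) := by
        rw [Matrix.sub_mulVec, Matrix.one_mulVec, Matrix.smul_mulVec]
      rw [h1] at hv
      have h2 : v = om • ((N * G * A) *ᵥ v) := sub_eq_zero.mp hv
      rw [h2, ← Matrix.mulVec_mulVec, ← hw]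
    have hom0 : om ≠ 0 := by
      rintro rfl
      rw [zero_smul] at hveq
      exact hv0 hveq
    have hEv : Eᴴ *ᵥ v = 0 := by
      rw [hveq, Matrix.mulVec_smul, Matrix.mulVec_mulVec, ← Matrix.mul_assoc, hEN,
        Matrix.zero_mul, Matrix.zero_mulVec, smul_zero]
    set y : Fin p → ℂ := Eᴴ *ᵥ w with hy
    set α : ℂ := star w ⬝ᵥ (G *ᵥ w) with hα
    set β : ℂ := star y ⬝ᵥ (c⁻¹ *ᵥ y) with hβ
    have hαnn : 0 ≤ α := hG.posSemidef.dotProduct_mulVec_nonneg w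
    have hβnn : 0 ≤ β := hcinv.posSemidef.dotProduct_mulVec_nonneg y
    have hdotE : ∀ (z : Idx n p → ℂ), Eᴴ *ᵥ z = 0 → ∀ (P : Matrix (Fin p) (Idx n p) ℂ),
        star z ⬝ᵥ ((E * P) *ᵥ z) = 0 := by
      intro z hz P
      rw [← Matrix.mulVec_mulVec, dotProduct_mulVec, star_vecMul_eq, hz, star_zero,
        zero_dotProduct]
    -- Step A : star v ⬝ᵥ G *ᵥ v = α  (uses Toeplitz)
    have hstepA : star v ⬝ᵥ (G *ᵥ v) = α := by
      have h1 : α = star v ⬝ᵥ ((Aᴴ * G * A) *ᵥ v) := by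
        rw [hα, hw, Matrix.star_mulVec, ← dotProduct_mulVec, Matrix.mulVec_mulVec,
          Matrix.mulVec_mulVec]
      rw [h1, hAdef, ToepId n p G hT, ← hEdef]
      rw [Matrix.add_mulVec, Matrix.sub_mulVec, Matrix.sub_mulVec, dotProduct_add,
        dotProduct_sub, dotProduct_sub]
      have e1 : star v ⬝ᵥ ((E * Eᴴ * G) *ᵥ v) = 0 := by
        rw [Matrix.mul_assoc]; exact hdotE v hEv _
      have e2 : star v ⬝ᵥ ((G * E * Eᴴ) *ᵥ v) = 0 := by
        rw [← Matrix.mulVec_mulVec, hEv, Matrix.mulVec_zero, dotProduct_zero]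
      have e3 : star v ⬝ᵥ ((E * (Eᴴ * G * E) * Eᴴ) *ᵥ v) = 0 := by
        rw [← Matrix.mulVec_mulVec, hEv, Matrix.mulVec_zero, dotProduct_zero]
      rw [e1, e2, e3]
      ring
    -- Step B : star v ⬝ᵥ G *ᵥ v = normSq om * (α - β)
    have hstepB : star v ⬝ᵥ (G *ᵥ v) = (Complex.normSq om : ℂ) * (α - β) := by
      have hkey : (N * G)ᴴ * G * (N * G) = G * N * G := by
        rw [Matrix.conjTranspose_mul, hNH, hGH]
        rw [show G * N * G * (N * G) = G * (N * G * N) * G by simp only [Matrix.mul_assoc]]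
        rw [hNGN]
      have h1 : star v ⬝ᵥ (G *ᵥ v) =
          (conj om * om) * (star ((N*G) *ᵥ w) ⬝ᵥ (G *ᵥ ((N*G) *ᵥ w))) := by
        rw [hveq, star_smul, Matrix.mulVec_smul, smul_dotProduct, dotProduct_smul]
        simp only [smul_eq_mul, starRingEnd_apply]
        ring
      have h2 : star ((N*G) *ᵥ w) ⬝ᵥ (G *ᵥ ((N*G) *ᵥ w)) =
          star w ⬝ᵥ ((G - E * (c⁻¹ * Eᴴ)) *ᵥ w) := by
        rw [Matrix.star_mulVec, ← dotProduct_mulVec, Matrix.mulVec_mulVec, Matrix.mulVec_mulVec,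
          hkey, hGNG]
      have h3 : star w ⬝ᵥ ((E * (c⁻¹ * Eᴴ)) *ᵥ w) = β := by
        rw [← Matrix.mulVec_mulVec, dotProduct_mulVec, star_vecMul_eq,
          ← Matrix.mulVec_mulVec, ← hy]
      rw [h1, h2, Matrix.sub_mulVec, dotProduct_sub, h3, ← hα]
      rw [show (conj om * om : ℂ) = (Complex.normSq om : ℂ) from by
        rw [mul_comm, Complex.mul_conj]]
    have heq : α = (Complex.normSq om : ℂ) * (α - β) := hstepA.symm.trans hstepB
    obtain ⟨hαre, hαim⟩ := Complex.nonneg_iff.mp hαnn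
    obtain ⟨hβre, hβim⟩ := Complex.nonneg_iff.mp hβnn
    have ht0 : 0 < Complex.normSq om := Complex.normSq_pos.mpr hom0
    have ht1 : Complex.normSq om ≤ 1 := by
      rw [Complex.normSq_eq_norm_sq]
      nlinarith [norm_nonneg om]
    have hre : α.re = Complex.normSq om * (α.re - β.re) := by
      have h := congrArg Complex.re heq
      rw [Complex.mul_re, Complex.ofReal_re, Complex.ofReal_im, Complex.sub_re,
        Complex.sub_im, ← hαim, ← hβim] at h
      simpa using h
    have hβre0 : β.re = 0 := real_aux ht0 ht1 hαre hβre hre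
    have hβ0 : β = 0 := by
      apply Complex.ext
      · exact hβre0
      · exact hβim.symm
    have hy0 : y = 0 := by
      by_contra hyne
      have := hcinv.dotProduct_mulVec_pos hyne
      rw [← hβ, hβ0] at this
      exact lt_irrefl 0 this
    have hNGw : (N * G) *ᵥ w = w := by
      rw [hNGr, Matrix.sub_mulVec, Matrix.one_mulVec]
      have : (Γ * (E * (c⁻¹ * Eᴴ))) *ᵥ w = 0 := by
        simp only [← Matrix.mulVec_mulVec]
        rw [← hy, hy0]
        simp
      rw [this, sub_zero]
    have hvom : v = om • w := by rw [hveq, hNGw]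
    have hvB : (1 - om • A) *ᵥ v = 0 := by
      rw [Matrix.sub_mulVec, Matrix.one_mulVec, Matrix.smul_mulVec, ← hw, ← hvom,
        hvom, sub_self]
    exact hv0 (mulVec_eq_zero_of_isUnit hBd hvB)
  have hMd : IsUnit (1 - om • (N * G * A)).det := (Matrix.isUnit_iff_isUnit_det _).mp hMu
  set B : Matrix (Idx n p) (Idx n p) ℂ := 1 - om • A with hBdef
  set M : Matrix (Idx n p) (Idx n p) ℂ := 1 - om • (N * G * A) with hMdef
  set X : Matrix (Idx n p) (Fin p) ℂ := B⁻¹ * (Γ * E) with hXdef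
  have hBB : B * B⁻¹ = 1 := Matrix.mul_nonsing_inv B hBd
  have hBX : B * X = Γ * E := by rw [hXdef, ← Matrix.mul_assoc, hBB, Matrix.one_mul]
  have hFB : Fm n p om * B = Eᴴ := by rw [hBdef, hAdef, hEdef]; exact FmId n p om
  have hF : Fm n p om = Eᴴ * B⁻¹ := by
    rw [← hFB, Matrix.mul_assoc, hBB, Matrix.mul_one]
  set K : Matrix (Fin p) (Fin p) ℂ := Fm n p om * Γ * E with hKdef
  have hKX : K = Eᴴ * X := by rw [hKdef, hF, hXdef, Matrix.mul_assoc, Matrix.mul_assoc]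
  -- the key identity : M * X = Γ * E * (c⁻¹ * K)
  have hBX2 : X - om • (A * X) = Γ * E := by
    rw [← hBX, hBdef, Matrix.sub_mul, Matrix.one_mul, Matrix.smul_mul]
  have hAX : om • (A * X) = X - Γ * E := by
    rw [← hBX2, sub_sub_cancel]
  have hstar : M * X = Γ * E * (c⁻¹ * K) := by
    rw [hMdef, Matrix.sub_mul, Matrix.one_mul, Matrix.smul_mul]
    have h4 : om • (N * G * A * X) = N * G * X - N * G * (Γ * E) := by
      rw [Matrix.mul_assoc (N*G) A X, ← Matrix.mul_smul, hAX, Matrix.mul_sub]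
    rw [h4]
    have h5 : N * G * (Γ * E) = 0 := by
      rw [Matrix.mul_assoc N G (Γ*E), ← Matrix.mul_assoc G Γ E, hGΓ, Matrix.one_mul, hNE]
    rw [h5, sub_zero, hNGr, Matrix.sub_mul, Matrix.one_mul, sub_sub_cancel, hKX]
    simp only [Matrix.mul_assoc]
  have hKu : IsUnit K.det := by
    rw [isUnit_iff_ne_zero]
    intro hKdet
    obtain ⟨x, hx0, hKx⟩ := Matrix.exists_mulVec_eq_zero_iff.mpr hKdet
    have h6 : M *ᵥ (X *ᵥ x) = 0 := by
      rw [Matrix.mulVec_mulVec, hstar, ← Matrix.mulVec_mulVec, ← Matrix.mulVec_mulVec,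
        ← Matrix.mulVec_mulVec, hKx]
      simp
    have h7 : X *ᵥ x = 0 := mulVec_eq_zero_of_isUnit hMd h6
    have h8 : (Γ * E) *ᵥ x = 0 := by
      rw [← hBX, ← Matrix.mulVec_mulVec, h7, Matrix.mulVec_zero]
    have h9 : E *ᵥ x = 0 := by
      have h10 : (G * (Γ * E)) *ᵥ x = 0 := by
        rw [← Matrix.mulVec_mulVec, h8, Matrix.mulVec_zero]
      rwa [← Matrix.mul_assoc, hGΓ, Matrix.one_mul] at h10
    rw [hEdef] at h9
    exact hx0 (EkInj n p h9)
  have hKK : K * K⁻¹ = 1 := Matrix.mul_nonsing_inv K hKu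
  have hMM : M⁻¹ * M = 1 := Matrix.nonsing_inv_mul M hMd
  refine ⟨hMu, ?_⟩
  have hXK : X * K⁻¹ = M⁻¹ * (Γ * E * c⁻¹) := by
    have h10 : M⁻¹ * (M * X) * K⁻¹ = M⁻¹ * (Γ * E * (c⁻¹ * K)) * K⁻¹ := by rw [hstar]
    rw [← Matrix.mul_assoc M⁻¹ M X, hMM, Matrix.one_mul] at h10
    rw [h10]
    rw [show M⁻¹ * (Γ * E * (c⁻¹ * K)) * K⁻¹ = M⁻¹ * (Γ * E * c⁻¹ * (K * K⁻¹)) by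
      simp only [Matrix.mul_assoc]]
    rw [hKK, Matrix.mul_one]
  calc Γ * E * K⁻¹ = B * X * K⁻¹ := by rw [hBX]
    _ = B * (X * K⁻¹) := by rw [Matrix.mul_assoc]
    _ = B * (M⁻¹ * (Γ * E * c⁻¹)) := by rw [hXK]
    _ = B * M⁻¹ * (Γ * E) * c⁻¹ := by simp only [Matrix.mul_assoc]

end
end
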